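/- arXiv:1706.04234 — 2 statements merged into one kernel-verified Lean document; each statement's English description precedes it below -/
import Mathlib

section
/- Let γ > 0, let Θ ∈ ℝ be a threshold, and let P⁻, P⁺ ∈ ℝ with P⁻ < P⁺ (the equilibria on the two sides of the wall). Suppose x : [t₀, t₂] → ℝ is continuous, solves x' = -γ(x - P⁻) on [t₀, t₁] and x' = -γ(x - P⁺) on [t₁, t₂], and that x is increasing on [t₀, t₁]. Then x is increasing on all of [t₀, t₂]; in particular x has no interior local maximum at t₁. -/
lemma ode_key (γ P a b : ℝ) (hab : a < b) (x : ℝ → ℝ)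
    (hx : ∀ t ∈ Set.Icc a b, HasDerivWithinAt x (-γ * (x t - P)) (Set.Icc a b) t) :
    ∀ t ∈ Set.Icc a b, x t = P + (x a - P) * Real.exp (γ * (a - t)) := by
  set g : ℝ → ℝ := fun t => Real.exp (γ * t) * (x t - P) with hg_def
  have hg : ∀ t ∈ Set.Icc a b, HasDerivWithinAt g 0 (Set.Icc a b) t := by
    intro t ht
    have h1 : HasDerivAt (fun t => Real.exp (γ * t)) (Real.exp (γ * t) * γ) t := by
      simpa [Function.comp_def] using (Real.hasDerivAt_exp (γ * t)).comp t ((hasDerivAt_id t).const_mul γ)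
    have h2 : HasDerivWithinAt (fun t => x t - P) (-γ * (x t - P)) (Set.Icc a b) t :=
      (hx t ht).sub_const P
    have h3 := (h1.hasDerivWithinAt).mul h2
    convert h3 using 1
    · rfl
    · rfl
    · rfl
    ring
  have hdiff : DifferentiableOn ℝ g (Set.Icc a b) := fun t ht =>
    (hg t ht).differentiableWithinAt
  have hud : UniqueDiffOn ℝ (Set.Icc a b) := uniqueDiffOn_Icc hab
  have hderiv : ∀ t ∈ Set.Ico a b, derivWithin g (Set.Icc a b) t = 0 := by
    intro t ht
    exact (hg t (Set.Ico_subset_Icc_self ht)).derivWithin (hud t (Set.Ico_subset_Icc_self ht))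
  have hconst := constant_of_derivWithin_zero hdiff hderiv
  intro t ht
  have h := hconst t ht
  have hexp : Real.exp (γ * t) ≠ 0 := (Real.exp_pos _).ne'
  have : x t - P = (x a - P) * Real.exp (γ * (a - t)) := by
    have := h
    simp only [hg_def] at this
    have h2 : Real.exp (γ * (a - t)) = Real.exp (γ * a) / Real.exp (γ * t) := by
      rw [← Real.exp_sub]; ring_nf
    rw [h2]
    field_simp
    linarith [this]
  linarith [this]

theorem stmt5 (γ Θ Pm Pp t₀ t₁ t₂ : ℝ) (hγ : 0 < γ) (hP : Pm < Pp)
    (ht₀ : t₀ < t₁) (ht₁ : t₁ < t₂) (x : ℝ → ℝ)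
    (hcont : ContinuousOn x (Set.Icc t₀ t₂))
    (hx₁ : ∀ t ∈ Set.Icc t₀ t₁, HasDerivWithinAt x (-γ * (x t - Pm)) (Set.Icc t₀ t₁) t)
    (hx₂ : ∀ t ∈ Set.Icc t₁ t₂, HasDerivWithinAt x (-γ * (x t - Pp)) (Set.Icc t₁ t₂) t)
    (hmono : StrictMonoOn x (Set.Icc t₀ t₁)) :
    StrictMonoOn x (Set.Icc t₀ t₂) ∧
    ¬ IsLocalMax x t₁ := by
  have key1 := ode_key γ Pm t₀ t₁ ht₀ x hx₁
  have key2 := ode_key γ Pp t₁ t₂ ht₁ x hx₂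
  -- x t₁ < Pm
  have hx1f := key1 t₁ ⟨ht₀.le, le_refl _⟩
  have he : Real.exp (γ * (t₀ - t₁)) < 1 := by
    rw [Real.exp_lt_one_iff]
    nlinarith
  have hepos : 0 < Real.exp (γ * (t₀ - t₁)) := Real.exp_pos _
  have h01 : x t₀ < x t₁ := hmono ⟨le_refl _, ht₀.le⟩ ⟨ht₀.le, le_refl _⟩ ht₀
  have hx0 : x t₀ < Pm := by nlinarith
  have hx1 : x t₁ < Pm := by nlinarith
  -- strict mono on right interval
  have mono2 : StrictMonoOn x (Set.Icc t₁ t₂) := by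
    intro s hs t ht hst
    rw [key2 s hs, key2 t ht]
    have hlt : Real.exp (γ * (t₁ - t)) < Real.exp (γ * (t₁ - s)) := by
      apply Real.exp_lt_exp.2
      nlinarith
    nlinarith [Real.exp_pos (γ * (t₁ - t)), Real.exp_pos (γ * (t₁ - s))]
  have monoAll : StrictMonoOn x (Set.Icc t₀ t₂) := by
    intro s hs t ht hst
    rcases le_or_gt t t₁ with h | h
    · exact hmono ⟨hs.1, (le_of_lt (lt_of_lt_of_le hst h))⟩ ⟨ht.1, h⟩ hst
    · rcases le_or_gt s t₁ with h2 | h2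
      · have step : x t₁ < x t := mono2 ⟨le_refl _, ht₁.le⟩ ⟨h.le, ht.2⟩ h
        rcases eq_or_lt_of_le h2 with h3 | h3
        · rw [h3]; exact step
        · exact lt_trans (hmono ⟨hs.1, h2⟩ ⟨ht₀.le, le_refl _⟩ h3) step
      · exact mono2 ⟨h2.le, hs.2⟩ ⟨h.le, ht.2⟩ hst
  refine ⟨monoAll, fun hmax => ?_⟩
  have h1 : ∀ᶠ y in nhdsWithin t₁ (Set.Ioi t₁), x y ≤ x t₁ :=
    (hmax.filter_mono nhdsWithin_le_nhds)
  have h2 : ∀ᶠ y in nhdsWithin t₁ (Set.Ioi t₁), y ∈ Set.Ioo t₁ t₂ :=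
    Ioo_mem_nhdsGT_of_mem ⟨le_refl _, ht₁⟩
  have h3 := (h1.and h2).exists
  obtain ⟨y, hy1, hy2⟩ := h3
  have : x t₁ < x y := mono2 ⟨le_refl _, ht₁.le⟩ ⟨hy2.1.le, hy2.2.le⟩ hy2.1
  linarith
end

section
/- Let γ > 0, Θ ∈ ℝ, P⁻ > P⁺ (equilibria on the two sides of a repressing wall). Suppose x : [t₀, t₂] → ℝ is continuous, solves x' = -γ(x - P⁻) on [t₀, t₁] and x' = -γ(x - P⁺) on [t₁, t₂], and x is decreasing on [t₀, t₁]. Then x is decreasing on all of [t₀, t₂]; in particular x has no interior local minimum at the switching time t₁. -/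
open Set

lemma sol_formula (γ P a b : ℝ) (hab : a < b) (x : ℝ → ℝ)
    (hcont : ContinuousOn x (Set.Icc a b))
    (hx : ∀ t ∈ Set.Icc a b, HasDerivWithinAt x (-γ * (x t - P)) (Set.Icc a b) t) :
    ∀ t ∈ Set.Icc a b, x t = P + (x a - P) * Real.exp (-γ * (t - a)) := by
  set f : ℝ → ℝ := fun t => (x t - P) * Real.exp (γ * t) with hf
  have fcont : ContinuousOn f (Icc a b) :=
    (hcont.sub continuousOn_const).mul (Real.continuous_exp.comp (continuous_const.mul continuous_id)).continuousOn
  have hderiv : ∀ t ∈ Ico a b, HasDerivWithinAt f 0 (Ici t) t := by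
    intro t ht
    have htI : t ∈ Icc a b := ⟨ht.1, ht.2.le⟩
    have hmem : Icc a b ∈ nhdsWithin t (Ici t) := by
      have h1 : Iic b ∈ nhdsWithin t (Ici t) :=
        mem_nhdsWithin_of_mem_nhds (Iic_mem_nhds ht.2)
      have h2 : Ici t ∈ nhdsWithin t (Ici t) := self_mem_nhdsWithin
      filter_upwards [h1, h2] with s hs1 hs2
      exact ⟨le_trans ht.1 hs2, hs1⟩
    have hx' : HasDerivWithinAt x (-γ * (x t - P)) (Ici t) t :=
      (hx t htI).mono_of_mem_nhdsWithin hmem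
    have hexp : HasDerivWithinAt (fun s => Real.exp (γ * s)) (γ * Real.exp (γ * t)) (Ici t) t := by
      have := ((Real.hasDerivAt_exp (γ * t)).comp t ((hasDerivAt_id t).const_mul γ))
      simpa [mul_comm, Function.comp_def] using this.hasDerivWithinAt
    have : HasDerivWithinAt f ((-γ * (x t - P)) * Real.exp (γ * t) + (x t - P) * (γ * Real.exp (γ * t))) (Ici t) t :=
      (hx'.sub_const P).mul hexp
    convert this using 1
    ring
  have hconst := constant_of_has_deriv_right_zero fcont hderiv
  intro t ht
  have h := hconst t ht
  have hne : Real.exp (γ * t) ≠ 0 := Real.exp_ne_zero _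
  have : x t - P = (x a - P) * Real.exp (γ * a) / Real.exp (γ * t) := by
    simp only [hf] at h
    field_simp
    linarith [h]
  rw [div_eq_mul_inv, ← Real.exp_neg] at this
  have key : Real.exp (γ * a) * Real.exp (-(γ * t)) = Real.exp (-γ * (t - a)) := by
    rw [← Real.exp_add]; congr 1; ring
  rw [mul_assoc, key] at this
  linarith [this]

theorem stmt6 (γ Θ Pm Pp t₀ t₁ t₂ : ℝ) (hγ : 0 < γ) (hP : Pp < Pm)
    (ht₀ : t₀ < t₁) (ht₁ : t₁ < t₂) (x : ℝ → ℝ)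
    (hcont : ContinuousOn x (Set.Icc t₀ t₂))
    (hx₁ : ∀ t ∈ Set.Icc t₀ t₁, HasDerivWithinAt x (-γ * (x t - Pm)) (Set.Icc t₀ t₁) t)
    (hx₂ : ∀ t ∈ Set.Icc t₁ t₂, HasDerivWithinAt x (-γ * (x t - Pp)) (Set.Icc t₁ t₂) t)
    (hmono : StrictAntiOn x (Set.Icc t₀ t₁)) :
    StrictAntiOn x (Set.Icc t₀ t₂) ∧
    ¬ IsLocalMin x t₁ := by
  have hsub1 : Icc t₀ t₁ ⊆ Icc t₀ t₂ := Icc_subset_Icc le_rfl ht₁.le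
  have hsub2 : Icc t₁ t₂ ⊆ Icc t₀ t₂ := Icc_subset_Icc ht₀.le le_rfl
  have sol1 := sol_formula γ Pm t₀ t₁ ht₀ x (hcont.mono hsub1) hx₁
  have sol2 := sol_formula γ Pp t₁ t₂ ht₁ x (hcont.mono hsub2) hx₂
  -- x t₁ > Pm
  have ht₁mem : t₁ ∈ Icc t₀ t₁ := ⟨ht₀.le, le_rfl⟩
  have ht₀mem : t₀ ∈ Icc t₀ t₁ := ⟨le_rfl, ht₀.le⟩
  have hE : Real.exp (-γ * (t₁ - t₀)) < 1 := by
    rw [Real.exp_lt_one_iff]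
    nlinarith
  have hEpos : 0 < Real.exp (-γ * (t₁ - t₀)) := Real.exp_pos _
  have hlt : x t₁ < x t₀ := hmono ht₀mem ht₁mem ht₀
  have hformula1 : x t₁ = Pm + (x t₀ - Pm) * Real.exp (-γ * (t₁ - t₀)) := sol1 t₁ ht₁mem
  have hc : 0 < x t₀ - Pm := by nlinarith
  have hxt₁ : Pm < x t₁ := by nlinarith
  have hd : 0 < x t₁ - Pp := by linarith
  -- strict anti on [t₁, t₂]
  have anti2 : StrictAntiOn x (Icc t₁ t₂) := by
    intro u hu v hv huv
    rw [sol2 u hu, sol2 v hv]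
    have : Real.exp (-γ * (v - t₁)) < Real.exp (-γ * (u - t₁)) := by
      apply Real.exp_lt_exp.2
      nlinarith
    nlinarith
  have anti : StrictAntiOn x (Icc t₀ t₂) := by
    intro u hu v hv huv
    rcases le_or_gt v t₁ with hv1 | hv1
    · exact hmono ⟨hu.1, huv.le.trans hv1⟩ ⟨hv.1, hv1⟩ huv
    · have hxv : x v < x t₁ := anti2 ⟨le_rfl, ht₁.le⟩ ⟨hv1.le, hv.2⟩ hv1
      rcases le_or_gt u t₁ with hu1 | hu1
      · rcases eq_or_lt_of_le hu1 with h | h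
        · rwa [h]
        · exact hxv.trans (hmono ⟨hu.1, hu1⟩ ht₁mem h)
      · exact anti2 ⟨hu1.le, hu.2⟩ ⟨hv1.le, hv.2⟩ huv
  refine ⟨anti, ?_⟩
  intro hmin
  have h1 : ∀ᶠ t in nhdsWithin t₁ (Ioi t₁), x t₁ ≤ x t :=
    hmin.filter_mono nhdsWithin_le_nhds
  have h2 : ∀ᶠ t in nhdsWithin t₁ (Ioi t₁), t < t₂ ∧ t₁ < t := by
    filter_upwards [Ioo_mem_nhdsGT_of_mem ⟨le_rfl, ht₁⟩, self_mem_nhdsWithin] with s hs hs'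
    exact ⟨hs.2, hs'⟩
  obtain ⟨s, hs1, hs2, hs3⟩ := (h1.and h2).exists
  have : x s < x t₁ := anti2 ⟨le_rfl, ht₁.le⟩ ⟨hs3.le, hs2.le⟩ hs3
  linarith
end
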